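/- Let n ≥ 1, m > 2n, and let σ be a permutation of {1,…,m} having at least one fixed point. Then ℓ(σ) ≥ n if and only if there exist k < m and a permutation τ of {1,…,k} with ℓ(τ) ≥ n such that σ contains τ. -/

import Mathlib

/-- The (Coxeter) length of a permutation: its number of inversions,
i.e. pairs `i < j` with `σ i > σ j`. -/
def invCount {m : ℕ} (σ : Equiv.Perm (Fin m)) : ℕ :=
  (Finset.univ.filter (fun p : Fin m × Fin m => p.1 < p.2 ∧ σ p.2 < σ p.1)).card

/-- `σ` pattern-contains `π`: there are indices `i_1 < ⋯ < i_k` such that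
`σ (i_a) < σ (i_b)` iff `π a < π b`. -/
def PatternContains {n k : ℕ} (σ : Equiv.Perm (Fin n)) (π : Equiv.Perm (Fin k)) : Prop :=
  ∃ f : Fin k ↪o Fin n, ∀ a b : Fin k, σ (f a) < σ (f b) ↔ π a < π b

theorem invCount_le_of_contains {m k : ℕ} (σ : Equiv.Perm (Fin m)) (τ : Equiv.Perm (Fin k))
    (h : PatternContains σ τ) : invCount τ ≤ invCount σ := by
  obtain ⟨f, hf⟩ := h
  apply Finset.card_le_card_of_injOn (fun p => (f p.1, f p.2))
  · intro p hp
    simp only [Finset.mem_coe, Finset.mem_filter, Finset.mem_univ, true_and] at hp ⊢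
    exact ⟨f.lt_iff_lt.mpr hp.1, (hf _ _).mpr hp.2⟩
  · intro p _ q _ h
    have h1 : f p.1 = f q.1 := congrArg Prod.fst h
    have h2 : f p.2 = f q.2 := congrArg Prod.snd h
    exact Prod.ext (f.injective h1) (f.injective h2)

/-- Lemma 3.3: let `n ≥ 1`, `m > 2n`, and let `σ ∈ S_m` have a fixed point. Then
`ℓ(σ) ≥ n` iff `σ` strictly contains (i.e. contains with `k < m`) a permutation `τ`
with `ℓ(τ) ≥ n`. -/
theorem fixed_point_lemma {n m : ℕ} (hn : 1 ≤ n) (hm : 2 * n < m)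
    (σ : Equiv.Perm (Fin m)) (hfix : ∃ i : Fin m, σ i = i) :
    n ≤ invCount σ ↔
      ∃ k < m, ∃ τ : Equiv.Perm (Fin k), n ≤ invCount τ ∧ PatternContains σ τ := by
  constructor
  · intro hσ
    obtain ⟨F, hFsub, hFcard⟩ := Finset.exists_subset_card_eq hσ
    have hFinv : ∀ p ∈ F, p.1 < p.2 ∧ σ p.2 < σ p.1 := by
      intro p hp
      have := hFsub hp
      simp only [Finset.mem_filter] at this
      exact this.2
    set S : Finset (Fin m) := F.image Prod.fst ∪ F.image Prod.snd with hSdef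
    have hmemS : ∀ p ∈ F, p.1 ∈ S ∧ p.2 ∈ S := fun p hp =>
      ⟨Finset.mem_union_left _ (Finset.mem_image_of_mem _ hp),
       Finset.mem_union_right _ (Finset.mem_image_of_mem _ hp)⟩
    have hk2 : S.card ≤ 2 * n := by
      calc S.card ≤ (F.image Prod.fst).card + (F.image Prod.snd).card :=
            Finset.card_union_le _ _
        _ ≤ F.card + F.card := Nat.add_le_add Finset.card_image_le Finset.card_image_le
        _ = 2 * n := by rw [hFcard]; ring
    set k := S.card with hkdef
    have hkm : k < m := lt_of_le_of_lt hk2 hm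
    refine ⟨k, hkm, ?_⟩
    -- the order embedding of Fin k onto S
    set f : Fin k ↪o Fin m := S.orderEmbOfFin rfl with hfdef
    have hfmem : ∀ a, f a ∈ S := fun a => Finset.orderEmbOfFin_mem _ _ _
    have hfsurj : ∀ x ∈ S, ∃ a, f a = x := by
      intro x hx
      have : x ∈ Set.range f := by rw [Finset.range_orderEmbOfFin]; exact hx
      exact this
    -- the image of S under σ
    set T : Finset (Fin m) := S.image σ with hTdef
    have hT : T.card = k := Finset.card_image_of_injective _ σ.injective
    set g : Fin k ≃o T := T.orderIsoOfFin hT with hgdef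
    have htmem : ∀ a : Fin k, σ (f a) ∈ T := fun a =>
      Finset.mem_image_of_mem _ (hfmem a)
    set t : Fin k → Fin k := fun a => g.symm ⟨σ (f a), htmem a⟩ with htdef
    have htinj : Function.Injective t := by
      intro a b hab
      have := g.symm.injective hab
      have : σ (f a) = σ (f b) := congrArg Subtype.val this
      exact f.injective (σ.injective this)
    set τ : Equiv.Perm (Fin k) := Equiv.ofBijective t (Finite.injective_iff_bijective.mp htinj)
      with hτdef
    have hτapp : ∀ a, τ a = t a := fun a => rfl
    have hkey : ∀ a b : Fin k, σ (f a) < σ (f b) ↔ τ a < τ b := by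
      intro a b
      rw [hτapp, hτapp, htdef]
      simp only [OrderIso.lt_iff_lt (g.symm)]
      exact (Subtype.mk_lt_mk).symm
    refine ⟨τ, ?_, ⟨f, fun a b => hkey a b⟩⟩
    -- invCount τ ≥ n
    have hne : Nonempty (Fin k) := by
      obtain ⟨p, hp⟩ := Finset.card_pos.mp (by rw [hFcard]; omega : 0 < F.card)
      have := (hmemS p hp).1
      exact ⟨(S.orderIsoOfFin rfl).symm ⟨p.1, this⟩⟩
    set u : Fin m → Fin k := Function.invFun f with hudef
    have hu : ∀ x ∈ S, f (u x) = x := by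
      intro x hx
      exact Function.invFun_eq (hfsurj x hx)
    calc n = F.card := hFcard.symm
      _ ≤ invCount τ := by
        apply Finset.card_le_card_of_injOn (fun p => (u p.1, u p.2))
        · intro p hp
          obtain ⟨hlt, hinv⟩ := hFinv p hp
          obtain ⟨h1, h2⟩ := hmemS p hp
          simp only [Finset.mem_coe, Finset.mem_filter, Finset.mem_univ, true_and]
          constructor
          · rw [← f.lt_iff_lt, hu _ h1, hu _ h2]; exact hlt
          · rw [← hkey]
            rw [hu _ h1, hu _ h2]; exact hinv
        · intro p hp q hq h
          obtain ⟨hp1, hp2⟩ := hmemS p hp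
          obtain ⟨hq1, hq2⟩ := hmemS q hq
          have h1 : u p.1 = u q.1 := congrArg Prod.fst h
          have h2 : u p.2 = u q.2 := congrArg Prod.snd h
          have e1 : p.1 = q.1 := by rw [← hu _ hp1, ← hu _ hq1, h1]
          have e2 : p.2 = q.2 := by rw [← hu _ hp2, ← hu _ hq2, h2]
          exact Prod.ext e1 e2
  · rintro ⟨k, hk, τ, hτ, hcont⟩
    exact le_trans hτ (invCount_le_of_contains σ τ hcont)
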